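/- Let C_{K,n} = (K/(n+K))·binom(2n+K-1, n) for n ≥ 0 and C_{K,n} = 0 for n < 0 (the convolution powers of the Catalan numbers), and define D_{K,M}(N) = det((C_{K,i+j+M})_{i,j=0}^{N-1}) for integers M and positive integers K, N, with D_{K,M}(0) = 1. Then for every natural number m and every positive integer k: (i) D_{2k-1,2-k-m}(N) = 0 for N = 1, 2, …, m+k-2; and (ii) for all natural numbers n, D_{2k-1,2-k-m}(n+m+k-1) = (-1)^{binom(m+k-1,2)} · D_{2k-1,1-k+m}(n). -/

import Mathlib

/-- The convolution powers of the Catalan numbers: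
`C_{K,n} = (K/(n+K))·binom(2n+K-1, n)` for `n ≥ 0`, and `C_{K,n} = 0` for `n < 0`. -/
noncomputable def Ccat (K : ℕ) (n : ℤ) : ℚ :=
  if 0 ≤ n then ((K : ℚ) / ((n : ℚ) + (K : ℚ))) * ((2 * n.toNat + K - 1).choose n.toNat)
  else 0

/-- The Hankel determinant `D_{K,M}(N) = det((C_{K,i+j+M}))_{i,j=0}^{N-1}`
(equal to `1` for `N = 0`). -/
noncomputable def Dcat (K : ℕ) (M : ℤ) (N : ℕ) : ℚ :=
  Matrix.det (Matrix.of fun i j : Fin N => Ccat K ((i : ℤ) + (j : ℤ) + M))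

open Finset PowerSeries

lemma ccat_neg (K : ℕ) (n : ℤ) (hn : n < 0) : Ccat K n = 0 := by
  simp [Ccat, not_le.2 hn]

lemma ccat_nat (K n : ℕ) :
    Ccat K n = ((K : ℚ) / ((n : ℚ) + (K : ℚ))) * ((2 * n + K - 1).choose n) := by
  simp [Ccat]

lemma ccat_zero (K : ℕ) (hK : 1 ≤ K) : Ccat K 0 = 1 := by
  have hK' : (K : ℚ) ≠ 0 := by
    have : (0:ℚ) < K := by exact_mod_cast hK
    exact this.ne'
  rw [show (0:ℤ) = ((0:ℕ):ℤ) from rfl, ccat_nat]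
  simp [div_self hK']

lemma ccat_zero' (n : ℤ) : Ccat 0 n = 0 := by
  unfold Ccat; split <;> simp

lemma E1 (n : ℕ) : Ccat 1 (n : ℤ) = (catalan n : ℚ) := by
  rw [ccat_nat]
  have h' : ((n:ℚ)+1) * (catalan n : ℚ) = ((2*n).choose n : ℚ) := by
    exact_mod_cast congrArg (Nat.cast (R := ℚ)) (succ_mul_catalan_eq_centralBinom n)
  have hne : ((n:ℚ)+1) ≠ 0 := by positivity
  rw [show 2*n+1-1 = 2*n from rfl]
  push_cast
  field_simp
  linarith [h']

lemma E2 (n : ℕ) : Ccat 2 (n : ℤ) = Ccat 1 ((n : ℤ) + 1) := by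
  rw [ccat_nat, show (n:ℤ)+1 = ((n+1:ℕ):ℤ) by push_cast; ring, ccat_nat]
  have hsym : (2*n+1).choose (n+1) = (2*n+1).choose n := by
    exact Nat.choose_symm_half n
  have hpas : (2*(n+1)+1-1).choose (n+1) = (2*n+1).choose n + (2*n+1).choose (n+1) := by
    rw [show 2*(n+1)+1-1 = (2*n+1)+1 from by omega]
    exact Nat.choose_succ_succ' _ _
  rw [show 2*n+2-1 = 2*n+1 from by omega, hpas, hsym]
  have hne1 : ((n:ℚ)+2) ≠ 0 := by positivity
  push_cast
  field_simp
  ring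

lemma key_id (K n : ℕ) (hK : 1 ≤ K) :
    Ccat (K+2) (n : ℤ) = Ccat (K+1) ((n:ℤ)+1) - Ccat K ((n:ℤ)+1) := by
  have hcast : ((n:ℤ)+1) = ((n+1:ℕ):ℤ) := by push_cast; ring
  rw [ccat_nat, hcast, ccat_nat, ccat_nat]
  set A := (2*n+K+1).choose n with hA
  have e1 : 2*n+(K+2)-1 = 2*n+K+1 := by omega
  have e2 : 2*(n+1)+(K+1)-1 = (2*n+K+1)+1 := by omega
  have e3 : 2*(n+1)+K-1 = 2*n+K+1 := by omega
  rw [e1, e2, e3, Nat.choose_succ_succ']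
  have hC : ((2*n+K+1).choose (n+1) : ℚ) * (n+1) = (A : ℚ) * (n+K+1) := by
    have := Nat.choose_succ_right_eq (2*n+K+1) n
    rw [show 2*n+K+1-n = n+K+1 from by omega] at this
    exact_mod_cast congrArg (Nat.cast (R := ℚ)) this
  have hn1 : ((n:ℚ)+1) ≠ 0 := by positivity
  have hC' : ((2*n+K+1).choose (n+1) : ℚ) = (A:ℚ) * ((n:ℚ)+(K:ℚ)+1) / ((n:ℚ)+1) := by
    field_simp
    push_cast at hC
    linarith [hC]
  push_cast
  rw [hC']
  have h2 : (n:ℚ) + (K:ℚ) + 2 ≠ 0 := by positivity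
  have h3 : (n:ℚ) + 1 + (K:ℚ) ≠ 0 := by positivity
  field_simp
  ring

lemma key_id' (K : ℕ) (hK : 1 ≤ K) (n : ℤ) :
    Ccat (K+2) n = Ccat (K+1) (n+1) - Ccat K (n+1) := by
  rcases lt_trichotomy n (-1) with h | h | h
  · rw [ccat_neg _ _ (by omega), ccat_neg _ _ (by omega), ccat_neg _ _ (by omega)]; ring
  · subst h
    rw [ccat_neg _ _ (by omega), show (-1:ℤ)+1 = 0 from by ring,
      ccat_zero _ (by omega), ccat_zero _ hK]; ring
  · have h0 : 0 ≤ n := by omega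
    obtain ⟨m, rfl⟩ := Int.eq_ofNat_of_zero_le h0
    exact key_id K m hK

noncomputable def catPS : PowerSeries ℚ := PowerSeries.mk fun n => (catalan n : ℚ)

lemma catPS_eq : catPS = 1 + X * catPS^2 := by
  ext n
  cases n with
  | zero => simp [catPS, coeff_mk, coeff_one]
  | succ n =>
    rw [map_add, coeff_one, coeff_succ_X_mul, pow_two, coeff_mul]
    simp only [catPS, coeff_mk, Nat.succ_ne_zero, if_false, zero_add]
    rw [Finset.Nat.sum_antidiagonal_eq_sum_range_succ_mk]
    rw [show (catalan (n+1) : ℚ) = ((∑ ij ∈ antidiagonal n, catalan ij.1 * catalan ij.2 : ℕ) : ℚ)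
      from by rw [← catalan_succ']]
    rw [Finset.Nat.sum_antidiagonal_eq_sum_range_succ_mk]
    push_cast
    ring

lemma catPS_inv : catPS * (1 - X * catPS) = 1 := by
  linear_combination catPS_eq

lemma coeff_catPS_pow : ∀ K, ∀ n : ℕ, coeff n (catPS^(K+1)) = Ccat (K+1) n := by
  intro K
  induction K using Nat.strong_induction_on with
  | _ K ih =>
    match K with
    | 0 => intro n; rw [pow_one]; exact (E1 n) ▸ (coeff_mk n _)
    | 1 =>
      intro n
      have h : coeff (n+1) catPS = coeff n (catPS^2) := by
        nth_rewrite 1 [catPS_eq]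
        rw [map_add, coeff_one, coeff_succ_X_mul]
        simp
      rw [← h, show coeff (n+1) catPS = (catalan (n+1):ℚ) from coeff_mk _ _, E2,
        show (n:ℤ)+1 = ((n+1:ℕ):ℤ) from by push_cast; ring, E1]
    | (K+2) =>
      intro n
      have hrel : catPS^(K+2) = catPS^(K+1) + X * catPS^(K+3) := by
        calc catPS^(K+2) = catPS^(K+1) * catPS := by ring
        _ = catPS^(K+1) * (1 + X * catPS^2) := by rw [← catPS_eq]
        _ = catPS^(K+1) + X * catPS^(K+3) := by ring
      have h := congrArg (coeff (n+1)) hrel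
      rw [map_add, coeff_succ_X_mul] at h
      have h1 := ih (K+1) (by omega) (n+1)
      have h0 := ih K (by omega) (n+1)
      rw [h1, h0] at h
      have hk := key_id (K+1) n (by omega)
      show coeff n (catPS^(K+3)) = Ccat (K+3) (n:ℤ)
      rw [show (K+3) = (K+1)+2 from by omega, hk]
      push_cast at h ⊢
      linarith [h]

noncomputable def gg (K t : ℕ) : ℚ := coeff t ((1 - X * catPS)^K)

lemma gg_zero (K : ℕ) : gg K 0 = 1 := by
  unfold gg
  rw [coeff_zero_eq_constantCoeff, map_pow]
  simp [catPS]

lemma gg_conv (K : ℕ) (hK : 1 ≤ K) (t : ℕ) (ht : 1 ≤ t) :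
    ∑ a ∈ range (t+1), Ccat K a * gg K (t-a) = 0 := by
  obtain ⟨K, rfl⟩ : ∃ K', K = K'+1 := ⟨K-1, by omega⟩
  have h : (catPS^(K+1)) * ((1 - X*catPS)^(K+1)) = 1 := by
    rw [← mul_pow, catPS_inv, one_pow]
  have h2 := congrArg (coeff t) h
  rw [coeff_mul, coeff_one, if_neg (by omega), Finset.Nat.sum_antidiagonal_eq_sum_range_succ_mk]
    at h2
  rw [← h2]
  apply Finset.sum_congr rfl
  intro a _
  rw [coeff_catPS_pow K a]
  rfl

lemma gg_formula : ∀ K, ∀ t : ℕ, K + 1 ≤ 2*t → gg K t = -Ccat K ((t:ℤ) - K) := by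
  intro K
  induction K using Nat.strong_induction_on with
  | _ K ih =>
    match K with
    | 0 =>
      intro t ht
      unfold gg
      rw [pow_zero, coeff_one, if_neg (by omega), ccat_zero']
      ring
    | 1 =>
      intro t ht
      obtain ⟨t, rfl⟩ : ∃ t', t = t'+1 := ⟨t-1, by omega⟩
      unfold gg
      rw [pow_one, map_sub, coeff_one, if_neg (by omega), coeff_succ_X_mul]
      show (0:ℚ) - coeff t catPS = _
      rw [show ((t+1:ℕ):ℤ) - (1:ℕ) = ((t:ℕ):ℤ) from by push_cast; ring, E1]
      simp [catPS]
    | (K+2) =>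
      intro t ht
      have hsq : (1 - X*catPS)^2 = (1 - X*catPS) - X := by
        linear_combination (-X) * catPS_eq
      have hrel : (1 - X*catPS)^(K+2) = (1 - X*catPS)^(K+1) - X * (1 - X*catPS)^K := by
        calc (1 - X*catPS)^(K+2) = (1-X*catPS)^K * (1-X*catPS)^2 := by ring
        _ = (1-X*catPS)^K * ((1 - X*catPS) - X) := by rw [hsq]
        _ = (1 - X*catPS)^(K+1) - X * (1 - X*catPS)^K := by ring
      obtain ⟨t, rfl⟩ : ∃ t', t = t'+1 := ⟨t-1, by omega⟩
      have h := congrArg (coeff (t+1)) hrel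
      rw [map_sub, coeff_succ_X_mul] at h
      have h1 : gg (K+1) (t+1) = -Ccat (K+1) (((t+1:ℕ):ℤ) - (K+1)) :=
        ih (K+1) (by omega) (t+1) (by omega)
      have h0 : gg K t = -Ccat K (((t:ℕ):ℤ) - K) := ih K (by omega) t (by omega)
      unfold gg at h1 h0
      show coeff (t+1) ((1 - X*catPS)^(K+2)) = _
      rw [h, h1, h0]
      cases K with
      | zero =>
        obtain ⟨u, rfl⟩ : ∃ u, t = u+1 := ⟨t-1, by omega⟩
        rw [ccat_zero']
        have hE := E2 u
        push_cast at hE ⊢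
        ring_nf at hE ⊢
        linarith [hE]
      | succ K =>
        have hki := key_id' (K+1) (by omega) (((t+1:ℕ):ℤ) - (K+3))
        push_cast at hki ⊢
        ring_nf at hki ⊢
        linarith [hki]

lemma detJ : ∀ r : ℕ,
    Matrix.det (Matrix.of fun i j : Fin r => if (i:ℕ)+(j:ℕ)+1 = r then (1:ℚ) else 0)
      = (-1)^(r.choose 2) := by
  intro r
  induction r with
  | zero => simp [Matrix.det_fin_zero]
  | succ r ih =>
    rw [Matrix.det_succ_row_zero]
    rw [Finset.sum_eq_single (Fin.last r)]
    · have hlast : ((Fin.last r : Fin (r+1)):ℕ) = r := rfl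
      rw [show (Matrix.of fun i j : Fin (r+1) => if (i:ℕ)+(j:ℕ)+1 = r+1 then (1:ℚ) else 0)
            0 (Fin.last r) = 1 from by simp [Matrix.of_apply]]
      have hsub : ((Matrix.of fun i j : Fin (r+1) => if (i:ℕ)+(j:ℕ)+1 = r+1 then (1:ℚ) else 0).submatrix
          Fin.succ (Fin.last r).succAbove)
          = (Matrix.of fun i j : Fin r => if (i:ℕ)+(j:ℕ)+1 = r then (1:ℚ) else 0) := by
        ext i j
        rw [Fin.succAbove_last]
        simp only [Matrix.submatrix_apply, Matrix.of_apply, Fin.val_succ, Fin.coe_castSucc]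
        congr 1
        simp only [eq_iff_iff]
        omega
      rw [hsub, ih, hlast]
      rw [show (r+1).choose 2 = r.choose 2 + r from by rw [Nat.choose_succ_succ]; simp [Nat.choose_one_right]; omega]
      rw [pow_add]
      ring
    · intro j _ hj
      have : ¬ ((0:ℕ) + (j:ℕ) + 1 = r+1) := by
        intro h
        apply hj
        apply Fin.ext
        simp only [Fin.val_last]
        omega
      rw [show (Matrix.of fun i j : Fin (r+1) => if (i:ℕ)+(j:ℕ)+1 = r+1 then (1:ℚ) else 0)
            0 j = 0 from by simpa [Matrix.of_apply] using this]
      ring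
    · intro h
      exact absurd (Finset.mem_univ _) h

lemma LA (F : ℤ → ℚ) (G : ℕ → ℚ) (hF0 : F 0 = 1) (hFneg : ∀ t : ℤ, t < 0 → F t = 0)
    (hG0 : G 0 = 1) (hconv : ∀ t : ℕ, 1 ≤ t → ∑ a ∈ range (t+1), F a * G (t-a) = 0)
    (r n : ℕ) :
    Matrix.det (Matrix.of fun i j : Fin (n+r) => F ((i:ℤ) + (j:ℤ) + 1 - (r:ℤ))) =
      (-1:ℚ)^(r.choose 2) * (-1:ℚ)^n *
        Matrix.det (Matrix.of fun p q : Fin n => G ((p:ℕ)+(q:ℕ)+r+1)) := by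
  set N := n + r with hN
  set A : Matrix (Fin N) (Fin N) ℚ :=
    Matrix.of fun i j : Fin N => F ((i:ℤ) + (j:ℤ) + 1 - (r:ℤ)) with hA
  set T : Matrix (Fin N) (Fin N) ℚ :=
    Matrix.of fun l j : Fin N => if (l:ℕ) ≤ (j:ℕ) then G ((j:ℕ) - (l:ℕ)) else 0 with hT
  have hTtri : T.BlockTriangular id := by
    intro i j hij
    exact if_neg (by exact Nat.not_le.2 hij)
  have hTdet : T.det = 1 := by
    rw [Matrix.det_of_upperTriangular hTtri]
    have h1 : ∀ i : Fin N, T i i = 1 := fun i => by simp [hT, hG0]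
    simp [h1]
  have key : ∀ i j : Fin N, (A * T) i j =
      if (i:ℕ) < r then (if (i:ℕ)+(j:ℕ)+1 = r then 1 else 0)
      else -∑ a ∈ range ((i:ℕ) - r + 1), F a * G ((i:ℕ)+(j:ℕ)+1-r-a) := by
    intro i j
    rw [Matrix.mul_apply]
    have step1 : (∑ l : Fin N, A i l * T l j)
        = ∑ l ∈ range ((j:ℕ)+1), F (((i:ℕ):ℤ) + (l:ℤ) + 1 - (r:ℤ)) * G ((j:ℕ) - l) := by
      have e0 : (∑ l : Fin N, A i l * T l j)
          = ∑ l ∈ range N, (F (((i:ℕ):ℤ) + (l:ℤ) + 1 - (r:ℤ)) *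
              (if l ≤ (j:ℕ) then G ((j:ℕ) - l) else 0)) := by
        rw [← Fin.sum_univ_eq_sum_range]
        apply Finset.sum_congr rfl
        intro l _
        simp [hA, hT]
      rw [e0]
      rw [← Finset.sum_subset (Finset.range_subset_range.2 (by omega : (j:ℕ)+1 ≤ N))]
      · apply Finset.sum_congr rfl
        intro l hl
        simp only [mem_range] at hl
        rw [if_pos (by omega)]
      · intro x hx hnx
        simp only [mem_range] at hx hnx
        rw [if_neg (by omega)]
        ring
    rw [step1]
    by_cases hir : (i:ℕ) < r
    · rw [if_pos hir]
      by_cases hijr : (i:ℕ)+(j:ℕ)+1 < r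
      · rw [if_neg (by omega)]
        apply Finset.sum_eq_zero
        intro l hl
        simp only [mem_range] at hl
        rw [hFneg _ (by omega), zero_mul]
      · set t := (i:ℕ)+(j:ℕ)+1-r with hdt
        rw [show (j:ℕ)+1 = (r-1-(i:ℕ)) + (t+1) from by omega, Finset.sum_range_add]
        have hz : ∑ l ∈ range (r-1-(i:ℕ)), F (((i:ℕ):ℤ) + (l:ℤ) + 1 - (r:ℤ)) * G ((j:ℕ) - l)
            = 0 := by
          apply Finset.sum_eq_zero
          intro l hl
          simp only [mem_range] at hl
          rw [hFneg _ (by omega), zero_mul]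
        rw [hz, zero_add]
        have he : ∀ a ∈ range (t+1),
            F (((i:ℕ):ℤ) + (((r-1-(i:ℕ)+a : ℕ)):ℤ) + 1 - (r:ℤ)) * G ((j:ℕ) - (r-1-(i:ℕ)+a))
            = F a * G (t - a) := by
          intro a ha
          simp only [mem_range] at ha
          congr 1
          · congr 1
            omega
          · congr 1
            omega
        rw [Finset.sum_congr rfl he]
        rcases Nat.eq_zero_or_pos t with h0 | hpos
        · rw [if_pos (by omega), h0]
          simp [hF0, hG0]
        · rw [if_neg (by omega)]
          exact hconv t hpos
    · rw [if_neg hir]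
      push_neg at hir
      set t := (i:ℕ)+(j:ℕ)+1-r with hdt
      have hconvt := hconv t (by omega)
      rw [show t+1 = ((i:ℕ)-r+1) + ((j:ℕ)+1) from by omega, Finset.sum_range_add] at hconvt
      have he : ∀ l ∈ range ((j:ℕ)+1),
          F ((((i:ℕ)-r+1) + l : ℕ)) * G (t - ((i:ℕ)-r+1+l))
          = F (((i:ℕ):ℤ) + (l:ℤ) + 1 - (r:ℤ)) * G ((j:ℕ) - l) := by
        intro l hl
        simp only [mem_range] at hl
        congr 1
        · congr 1
          omega
        · congr 1
          omega
      rw [Finset.sum_congr rfl he] at hconvt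
      linarith [hconvt]
  -- reindexing
  have hrn : r + n = N := by omega
  set e : (Fin r ⊕ Fin n) ≃ Fin N := finSumFinEquiv.trans (finCongr hrn) with he
  have hval_l : ∀ i : Fin r, ((e (Sum.inl i)) : ℕ) = (i:ℕ) := by
    intro i
    simp [he, finSumFinEquiv_apply_left]
  have hval_r : ∀ p : Fin n, ((e (Sum.inr p)) : ℕ) = r + (p:ℕ) := by
    intro p
    simp [he, finSumFinEquiv_apply_right, Fin.natAdd]
  set J : Matrix (Fin r) (Fin r) ℚ :=
    Matrix.of (fun i j : Fin r => if (i:ℕ)+(j:ℕ)+1 = r then (1:ℚ) else 0) with hJ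
  set Cb : Matrix (Fin n) (Fin r) ℚ :=
    Matrix.of (fun p q => (A*T) (e (Sum.inr p)) (e (Sum.inl q))) with hCb
  set Fm : Matrix (Fin n) (Fin n) ℚ :=
    Matrix.of (fun p a : Fin n =>
      if (a:ℕ) ≤ (p:ℕ) then F ((((p:ℕ)-(a:ℕ) : ℕ)):ℤ) else 0) with hFm
  set H : Matrix (Fin n) (Fin n) ℚ :=
    Matrix.of (fun a q : Fin n => G ((a:ℕ)+(q:ℕ)+r+1)) with hH
  have hblocks : (A*T).submatrix e e = Matrix.fromBlocks J 0 Cb ((-1:ℚ) • (Fm * H)) := by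
    ext i j
    cases i with
    | inl i =>
      cases j with
      | inl j =>
        rw [Matrix.submatrix_apply, key, if_pos (by rw [hval_l]; omega)]
        simp only [Matrix.fromBlocks_apply₁₁, hJ, Matrix.of_apply, hval_l]
      | inr q =>
        rw [Matrix.submatrix_apply, key, if_pos (by rw [hval_l]; omega)]
        rw [if_neg (by rw [hval_l, hval_r]; omega)]
        simp
    | inr p =>
      cases j with
      | inl j => rfl
      | inr q =>
        rw [Matrix.submatrix_apply, key, if_neg (by rw [hval_r]; omega)]
        simp only [Matrix.fromBlocks_apply₂₂, Matrix.smul_apply, Matrix.mul_apply, smul_eq_mul,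
          neg_one_mul]
        rw [neg_inj]
        set f : ℕ → ℚ :=
          fun a => (if a ≤ (p:ℕ) then F ((((p:ℕ)-a : ℕ)):ℤ) else 0) * G (a+(q:ℕ)+r+1) with hf
        have e2 : (∑ a : Fin n, Fm p a * H a q) = ∑ a ∈ range n, f a := by
          rw [← Fin.sum_univ_eq_sum_range f n]
          exact Finset.sum_congr rfl (fun a _ => by simp [hFm, hH, hf])
        rw [e2]
        have e3 : (∑ a ∈ range n, f a) = ∑ a ∈ range ((p:ℕ)+1), f a := by
          rw [← Finset.sum_subset (Finset.range_subset_range.2 (by omega : (p:ℕ)+1 ≤ n))]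
          intro x hx hnx
          simp only [mem_range] at hx hnx
          rw [hf]
          simp only []
          rw [if_neg (by omega), zero_mul]
        have e4 : (∑ a ∈ range ((p:ℕ)+1), f a)
            = ∑ a ∈ range ((p:ℕ)+1), f ((p:ℕ)+1-1-a) :=
          (Finset.sum_range_reflect f _).symm
        rw [e3, e4, hval_r, hval_r, show r + (p:ℕ) - r + 1 = (p:ℕ)+1 from by omega]
        apply Finset.sum_congr rfl
        intro a ha
        simp only [mem_range] at ha
        rw [hf]
        simp only []
        rw [if_pos (by omega)]
        congr 1
        · congr 1
          omega
        · congr 1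
          omega
  have hFmtri : Fm.BlockTriangular OrderDual.toDual := by
    intro p a hpa
    exact if_neg (by exact Nat.not_le.2 hpa)
  have hFmdet : Fm.det = 1 := by
    rw [Matrix.det_of_lowerTriangular Fm hFmtri]
    have h1 : ∀ p : Fin n, Fm p p = 1 := fun p => by simp [hFm, hF0]
    simp [h1]
  calc A.det = A.det * T.det := by rw [hTdet, mul_one]
    _ = (A*T).det := (Matrix.det_mul A T).symm
    _ = ((A*T).submatrix e e).det := (Matrix.det_submatrix_equiv_self e _).symm
    _ = (Matrix.fromBlocks J 0 Cb ((-1:ℚ) • (Fm * H))).det := by rw [hblocks]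
    _ = J.det * ((-1:ℚ) • (Fm * H)).det := Matrix.det_fromBlocks_zero₁₂ _ _ _
    _ = (-1:ℚ)^(r.choose 2) * ((-1:ℚ)^n * (Fm.det * H.det)) := by
        rw [detJ r, Matrix.det_smul, Matrix.det_mul, Fintype.card_fin]
    _ = (-1:ℚ)^(r.choose 2) * (-1:ℚ)^n * H.det := by rw [hFmdet]; ring

lemma vanish (K : ℕ) (M : ℤ) (N : ℕ) (hN : 1 ≤ N) (hM : (N:ℤ) ≤ -M) :
    Dcat K M N = 0 := by
  rw [Dcat, Matrix.det_apply]
  apply Finset.sum_eq_zero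
  intro σ _
  have hex : ∃ i0 : Fin N, (((σ i0 : Fin N):ℕ):ℤ) + ((i0:ℕ):ℤ) + M < 0 := by
    by_contra hcon
    push_neg at hcon
    have hsum : ∑ i : Fin N, ((((σ i : Fin N):ℕ):ℤ) + ((i:ℕ):ℤ))
        = 2 * ∑ i : Fin N, ((i:ℕ):ℤ) := by
      rw [Finset.sum_add_distrib, Equiv.sum_comp σ (fun i : Fin N => ((i:ℕ):ℤ))]
      ring
    have hgauss : (∑ i : Fin N, ((i:ℕ):ℤ)) * 2 = (N:ℤ) * ((N:ℤ) - 1) := by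
      have h1 := Finset.sum_range_id_mul_two N
      have h2 : ∑ i : Fin N, ((i:ℕ):ℤ) = ((∑ i ∈ range N, i : ℕ) : ℤ) := by
        rw [Fin.sum_univ_eq_sum_range (fun i : ℕ => (i:ℤ)) N]
        push_cast
        ring
      rw [h2]
      have : ((N * (N-1) : ℕ) : ℤ) = (N:ℤ) * ((N:ℤ)-1) := by
        push_cast [Nat.cast_sub (by omega : 1 ≤ N)]
        ring
      rw [← this, ← h1]
      push_cast
      ring
    have hlow : ∀ i ∈ (Finset.univ : Finset (Fin N)),
        -M ≤ (((σ i : Fin N):ℕ):ℤ) + ((i:ℕ):ℤ) := by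
      intro i _
      have := hcon i
      omega
    have hcard := Finset.card_nsmul_le_sum Finset.univ _ (-M) hlow
    rw [Finset.card_univ, Fintype.card_fin, hsum] at hcard
    rw [nsmul_eq_mul] at hcard
    have hNN : (N:ℤ) * (N:ℤ) ≤ (N:ℤ) * (-M) :=
      mul_le_mul_of_nonneg_left hM (by positivity)
    have hN1 : (1:ℤ) ≤ (N:ℤ) := by exact_mod_cast hN
    nlinarith [hgauss, hcard, hNN, hN1]
  obtain ⟨i0, hi0⟩ := hex
  have hzero : (∏ i, (Matrix.of fun i j : Fin N => Ccat K ((i : ℤ) + (j : ℤ) + M)) (σ i) i) = 0 :=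
    Finset.prod_eq_zero (Finset.mem_univ i0) (by
      rw [Matrix.of_apply]
      exact ccat_neg _ _ hi0)
  rw [hzero, smul_zero]

theorem stmt7 (m : ℕ) (k : ℕ) (hk : 0 < k) :
    (∀ N : ℕ, 1 ≤ N → N ≤ m + k - 2 →
        Dcat (2 * k - 1) (2 - (k : ℤ) - (m : ℤ)) N = 0) ∧
      (∀ n : ℕ,
        Dcat (2 * k - 1) (2 - (k : ℤ) - (m : ℤ)) (n + m + k - 1) =
          (-1 : ℚ) ^ ((m + k - 1).choose 2) * Dcat (2 * k - 1) (1 - (k : ℤ) + (m : ℤ)) n) := by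
  constructor
  · intro N hN1 hN2
    apply vanish _ _ _ hN1
    omega
  · intro n
    set K := 2*k-1 with hKdef
    set r := m + k - 1 with hrdef
    have hK1 : 1 ≤ K := by omega
    have hsize : n + m + k - 1 = n + r := by omega
    rw [hsize]
    simp only [Dcat]
    have hmat : (Matrix.of fun i j : Fin (n+r) => Ccat K ((i:ℤ)+(j:ℤ)+(2-(k:ℤ)-(m:ℤ))))
        = (Matrix.of fun i j : Fin (n+r) => Ccat K ((i:ℤ)+(j:ℤ)+1-(r:ℤ))) := by
      ext i j
      simp only [Matrix.of_apply]
      congr 1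
      omega
    rw [hmat]
    rw [LA (Ccat K) (gg K) (ccat_zero K hK1) (ccat_neg K) (gg_zero K) (gg_conv K hK1) r n]
    have hmat2 : (Matrix.of fun p q : Fin n => gg K ((p:ℕ)+(q:ℕ)+r+1))
        = (-1:ℚ) • (Matrix.of fun p q : Fin n => Ccat K ((p:ℤ)+(q:ℤ)+(1-(k:ℤ)+(m:ℤ)))) := by
      ext p q
      rw [Matrix.smul_apply, Matrix.of_apply, Matrix.of_apply,
        gg_formula K ((p:ℕ)+(q:ℕ)+r+1) (by omega), smul_eq_mul, neg_one_mul, neg_inj]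
      congr 1
      omega
    rw [hmat2, Matrix.det_smul, Fintype.card_fin]
    have h11 : ((-1:ℚ)^n) * ((-1:ℚ)^n) = 1 := by
      rw [← pow_add]
      exact Even.neg_one_pow ⟨n, by ring⟩
    set d := Matrix.det (Matrix.of fun p q : Fin n => Ccat K ((p:ℤ)+(q:ℤ)+(1-(k:ℤ)+(m:ℤ)))) with hd
    linear_combination ((-1:ℚ)^(r.choose 2) * d) * h11
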